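/- arXiv:0909.3877 — 5 statements merged into one kernel-verified Lean document; each statement's English description precedes it below -/
import Mathlib

section
/- The graph G₂ has diameter at most 3. -/
/-- The vertex set of the construction `G₂` built from a graph `G₁` on vertex set `V`:
`u w` for `w ∈ U₁ ∪ U₂` (`Sum.inl` = copy in `U₁`, `Sum.inr` = copy in `U₂`),
`y p` for each unordered pair `p` of distinct vertices of `U₁ ∪ U₂`,
plus the two special vertices `z` and `x`. -/
inductive V2 (V : Type u) : Type u where
  | u : V ⊕ V → V2 V
  | y : {p : Sym2 (V ⊕ V) // ¬ p.IsDiag} → V2 V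
  | z : V2 V
  | x : V2 V

/-- The `Y`-vertex `y(a,b)` corresponding to an unordered pair `{a, b}` of distinct
vertices of `U₁ ∪ U₂`. -/
def yv {V : Type u} (a b : V ⊕ V) (h : a ≠ b) : V2 V :=
  V2.y ⟨s(a, b), by simpa using h⟩

/-- The base (pre-symmetrization) edge relation of `G₂`: copies of the edges of `G₁`
inside `U₁` and inside `U₂`, the twin edges, `Y` a clique, each `y(a,b)` joined to
`a` and `b`, `z` joined to all of `Y`, and the edge `zx`. -/
def baseRel {V : Type u} (G : SimpleGraph V) : V2 V → V2 V → Prop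
  | .u (Sum.inl a), .u (Sum.inl b) => G.Adj a b
  | .u (Sum.inr a), .u (Sum.inr b) => G.Adj a b
  | .u (Sum.inl a), .u (Sum.inr b) => a = b
  | .u w, .y p => w ∈ p.1
  | .y _, .y _ => True
  | .z, .y _ => True
  | .z, .x => True
  | _, _ => False

/-- The graph `G₂` built from `G₁ = G`. -/
def G₂ {V : Type u} (G : SimpleGraph V) : SimpleGraph (V2 V) :=
  SimpleGraph.fromRel (baseRel G)

/-- A graph has diameter at most `D` if every pair of distinct vertices is
joined by a path (walk) with at most `D` edges. -/
def hasDiamLE {α : Type u} (H : SimpleGraph α) (D : ℕ) : Prop :=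
  ∀ a b : α, a ≠ b → ∃ w : H.Walk a b, w.length ≤ D

/-- `D` is a dominating set of `G`: every vertex not in `D` is adjacent to a vertex of `D`. -/
def IsDomSet {V : Type u} (G : SimpleGraph V) (D : Set V) : Prop :=
  ∀ v ∉ D, ∃ s ∈ D, G.Adj s v

/-- The graph obtained from `H` by adding the set `S` of unordered pairs as edges. -/
def augGraph {α : Type u} (H : SimpleGraph α) (S : Set (Sym2 α)) : SimpleGraph α :=
  SimpleGraph.fromEdgeSet (H.edgeSet ∪ S)

/-- `S` is a diameter-2 augmenting set for `G₂`: a set of unordered pairs of distinct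
vertices that are not edges of `G₂`, whose addition gives a graph of diameter at most 2. -/
def IsAugSet {V : Type u} (G : SimpleGraph V) (S : Set (Sym2 (V2 V))) : Prop :=
  (∀ e ∈ S, ¬ e.IsDiag ∧ e ∉ (G₂ G).edgeSet) ∧ hasDiamLE (augGraph (G₂ G) S) 2

/-- The twin of a vertex of `U₁ ∪ U₂`. -/
def tw {V : Type u} : V ⊕ V → V ⊕ V
  | Sum.inl a => Sum.inr a
  | Sum.inr a => Sum.inl a

lemma tw_ne {V : Type u} (w : V ⊕ V) : w ≠ tw w := by
  cases w <;> simp [tw]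

lemma hub_nd {V : Type u} (w : V ⊕ V) : ¬ (s(w, tw w)).IsDiag := by
  simpa using tw_ne w

/-- The `Y`-vertex `y(w, tw w)`. -/
def hub {V : Type u} (w : V ⊕ V) : V2 V :=
  V2.y ⟨s(w, tw w), hub_nd w⟩

lemma adj_uy {V : Type u} (G : SimpleGraph V) (w : V ⊕ V)
    (p : {p : Sym2 (V ⊕ V) // ¬ p.IsDiag}) (hm : w ∈ p.1) :
    (G₂ G).Adj (.u w) (.y p) := by
  refine ⟨by simp, Or.inl ?_⟩
  cases w <;> exact hm

lemma adj_u_hub {V : Type u} (G : SimpleGraph V) (w : V ⊕ V) :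
    (G₂ G).Adj (.u w) (hub w) :=
  adj_uy G w _ (by simp [Sym2.mem_iff])

lemma adj_yy {V : Type u} (G : SimpleGraph V)
    (p q : {p : Sym2 (V ⊕ V) // ¬ p.IsDiag}) (h : p ≠ q) :
    (G₂ G).Adj (.y p) (.y q) :=
  ⟨by simpa using h, Or.inl trivial⟩

lemma adj_zy {V : Type u} (G : SimpleGraph V)
    (p : {p : Sym2 (V ⊕ V) // ¬ p.IsDiag}) :
    (G₂ G).Adj .z (.y p) :=
  ⟨by simp, Or.inl trivial⟩

lemma adj_z_hub {V : Type u} (G : SimpleGraph V) (w : V ⊕ V) :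
    (G₂ G).Adj .z (hub w) :=
  adj_zy G _

lemma adj_zx {V : Type u} (G : SimpleGraph V) :
    (G₂ G).Adj .z .x :=
  ⟨by simp, Or.inl trivial⟩

theorem stmt0 {V : Type u} [Fintype V] [Nontrivial V] (G : SimpleGraph V)
    (hConn : G.Connected) :
    hasDiamLE (G₂ G) 3 := by
  classical
  intro a b hne
  cases a with
  | u w =>
    cases b with
    | u w' =>
      have hww' : w ≠ w' := by simpa using hne
      refine ⟨.cons (adj_uy G w ⟨s(w, w'), by simpa using hww'⟩ (by simp))
        (.cons ((adj_uy G w' ⟨s(w, w'), by simpa using hww'⟩ (by simp)).symm) .nil),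
        by simp⟩
    | y p =>
      by_cases hw : w ∈ p.1
      · exact ⟨.cons (adj_uy G w p hw) .nil, by simp⟩
      · have hneq : (⟨s(w, tw w), hub_nd w⟩ : {p : Sym2 (V ⊕ V) // ¬ p.IsDiag}) ≠ p := by
          intro h
          apply hw
          rw [← h]
          simp [Sym2.mem_iff]
        exact ⟨.cons (adj_u_hub G w) (.cons (adj_yy G _ p hneq) .nil), Nat.le_of_ble_eq_true rfl⟩
    | z => exact ⟨.cons (adj_u_hub G w) (.cons (adj_z_hub G w).symm .nil), by simp⟩
    | x => exact ⟨.cons (adj_u_hub G w)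
        (.cons (adj_z_hub G w).symm (.cons (adj_zx G) .nil)), by simp⟩
  | y p =>
    cases b with
    | u w =>
      by_cases hw : w ∈ p.1
      · exact ⟨.cons (adj_uy G w p hw).symm .nil, by simp⟩
      · have hneq : p ≠ (⟨s(w, tw w), hub_nd w⟩ : {p : Sym2 (V ⊕ V) // ¬ p.IsDiag}) := by
          intro h
          apply hw
          rw [h]
          simp [Sym2.mem_iff]
        exact ⟨.cons (adj_yy G p _ hneq) (.cons (adj_u_hub G w).symm .nil), Nat.le_of_ble_eq_true rfl⟩
    | y q =>
      have hpq : p ≠ q := by simpa using hne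
      exact ⟨.cons (adj_yy G p q hpq) .nil, by simp⟩
    | z => exact ⟨.cons (adj_zy G p).symm .nil, by simp⟩
    | x => exact ⟨.cons (adj_zy G p).symm (.cons (adj_zx G) .nil), by simp⟩
  | z =>
    cases b with
    | u w => exact ⟨.cons (adj_z_hub G w) (.cons (adj_u_hub G w).symm .nil), by simp⟩
    | y q => exact ⟨.cons (adj_zy G q) .nil, by simp⟩
    | z => exact absurd rfl hne
    | x => exact ⟨.cons (adj_zx G) .nil, by simp⟩
  | x =>
    cases b with
    | u w => exact ⟨.cons (adj_zx G).symm
        (.cons (adj_z_hub G w) (.cons (adj_u_hub G w).symm .nil)), by simp⟩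
    | y q => exact ⟨.cons (adj_zx G).symm (.cons (adj_zy G q) .nil), by simp⟩
    | z => exact ⟨.cons (adj_zx G).symm .nil, by simp⟩
    | x => exact absurd rfl hne
end

section
/- Every pair of distinct vertices of G₂ that is not joined by a path of at most 2 edges consists of the vertex x together with a vertex of U₁ ∪ U₂. -/
section Helpers
open Classical
variable {V : Type u} {G : SimpleGraph V}

lemma adj_of_base {a b : V2 V} (h : a ≠ b) (hb : baseRel G a b) : (G₂ G).Adj a b := by
  rw [G₂, SimpleGraph.fromRel_adj]; exact ⟨h, Or.inl hb⟩

lemma walk1 {a b : V2 V} (h : (G₂ G).Adj a b) : ∃ w : (G₂ G).Walk a b, w.length ≤ 2 :=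
  ⟨SimpleGraph.Walk.cons h SimpleGraph.Walk.nil, by simp⟩

lemma walk2 {a c b : V2 V} (h1 : (G₂ G).Adj a c) (h2 : (G₂ G).Adj c b) :
    ∃ w : (G₂ G).Walk a b, w.length ≤ 2 :=
  ⟨SimpleGraph.Walk.cons h1 (SimpleGraph.Walk.cons h2 SimpleGraph.Walk.nil), by simp⟩

lemma walk_rev {a b : V2 V} (h : ∃ w : (G₂ G).Walk a b, w.length ≤ 2) :
    ∃ w : (G₂ G).Walk b a, w.length ≤ 2 := by
  obtain ⟨w, hw⟩ := h
  exact ⟨w.reverse, by simpa using hw⟩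

lemma exists_ne_sum (a : V ⊕ V) : ∃ c : V ⊕ V, c ≠ a := by
  cases a with
  | inl v => exact ⟨Sum.inr v, by simp⟩
  | inr v => exact ⟨Sum.inl v, by simp⟩

lemma base_u_y {w : V ⊕ V} {p : {p : Sym2 (V ⊕ V) // ¬ p.IsDiag}} (h : w ∈ p.1) :
    baseRel G (V2.u w) (V2.y p) := by
  cases w <;> exact h

lemma adj_u_yv (a c : V ⊕ V) (h : c ≠ a) : (G₂ G).Adj (V2.u a) (yv a c (Ne.symm h)) :=
  adj_of_base (by simp [yv]) (base_u_y (by simp [yv]))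

lemma adj_y_y {p q : {p : Sym2 (V ⊕ V) // ¬ p.IsDiag}} (h : p ≠ q) :
    (G₂ G).Adj (V2.y p) (V2.y q) :=
  adj_of_base (by simpa using h) trivial

lemma adj_z_y (p : {p : Sym2 (V ⊕ V) // ¬ p.IsDiag}) : (G₂ G).Adj V2.z (V2.y p) :=
  adj_of_base (by simp) trivial

lemma adj_z_x : (G₂ G).Adj (V2.z : V2 V) V2.x :=
  adj_of_base (by simp) trivial

lemma walk_u_u (a b : V ⊕ V) (h : a ≠ b) :
    ∃ w : (G₂ G).Walk (V2.u a) (V2.u b) , w.length ≤ 2 := by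
  exact walk2 (adj_u_yv a b (Ne.symm h))
    (adj_of_base (by simp [yv]) (base_u_y (by simp [yv]))).symm

lemma walk_u_y (a : V ⊕ V) (p : {p : Sym2 (V ⊕ V) // ¬ p.IsDiag}) :
    ∃ w : (G₂ G).Walk (V2.u a) (V2.y p), w.length ≤ 2 := by
  by_cases hmem : a ∈ p.1
  · exact walk1 (adj_of_base (by simp) (base_u_y hmem))
  · obtain ⟨c, hc, hca⟩ : ∃ c ∈ p.1, c ≠ a := by
      obtain ⟨⟨x0, y0⟩, hxy⟩ := p.1.exists_rep
      have hx : x0 ∈ p.1 := by rw [← hxy]; exact Sym2.mem_mk_left _ _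
      exact ⟨x0, hx, fun h => hmem (h ▸ hx)⟩
    have hne : (yv a c (Ne.symm hca) : V2 V) ≠ V2.y p := by
      intro h
      apply hmem
      have : (⟨s(a, c), by simpa using (Ne.symm hca)⟩ : {p : Sym2 (V ⊕ V) // ¬ p.IsDiag}) = p := by
        simpa [yv] using h
      rw [← this]; simp
    exact walk2 (adj_u_yv a c hca) (adj_y_y (by simpa [yv] using hne))

lemma walk_u_z (a : V ⊕ V) :
    ∃ w : (G₂ G).Walk (V2.u a) (V2.z : V2 V), w.length ≤ 2 := by
  obtain ⟨c, hc⟩ := exists_ne_sum a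
  exact walk2 (adj_u_yv a c hc) (adj_z_y _).symm

end Helpers

theorem stmt1 {V : Type u} [Fintype V] [Nontrivial V] (G : SimpleGraph V)
    (hConn : G.Connected) :
    ∀ a b : V2 V, a ≠ b → (¬ ∃ w : (G₂ G).Walk a b, w.length ≤ 2) →
      (a = V2.x ∧ ∃ u : V ⊕ V, b = V2.u u) ∨ (b = V2.x ∧ ∃ u : V ⊕ V, a = V2.u u) := by
  intro a b hne hno
  match a, b with
  | .u s, .u t => exact absurd (walk_u_u s t (by simpa using hne)) hno
  | .u s, .y p => exact absurd (walk_u_y s p) hno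
  | .u s, .z => exact absurd (walk_u_z s) hno
  | .u s, .x => exact Or.inr ⟨rfl, s, rfl⟩
  | .y p, .u t => exact absurd (walk_rev (walk_u_y t p)) hno
  | .y p, .y q => exact absurd (walk1 (adj_y_y (by simpa using hne))) hno
  | .y p, .z => exact absurd (walk1 (adj_z_y p).symm) hno
  | .y p, .x => exact absurd (walk2 (adj_z_y p).symm adj_z_x) hno
  | .z, .u t => exact absurd (walk_rev (walk_u_z t)) hno
  | .z, .y q => exact absurd (walk1 (adj_z_y q)) hno
  | .z, .x => exact absurd (walk1 adj_z_x) hno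
  | .x, .u t => exact Or.inl ⟨rfl, t, rfl⟩
  | .x, .y q => exact absurd (walk_rev (walk2 (adj_z_y q).symm adj_z_x)) hno
  | .x, .z => exact absurd (walk1 adj_z_x.symm) hno
end

section
/- If S is a proper diameter-2 augmenting set for G₂, then the set {v ∈ V₁ : {x, v¹} ∈ S} is a dominating set of G₁ of size at most |S|. -/
theorem stmt3 {V : Type u} [Fintype V] [Nontrivial V] (G : SimpleGraph V)
    (hConn : G.Connected) (S : Set (Sym2 (V2 V))) (hS : IsAugSet G S)
    (hproper : ∀ e ∈ S, ∃ v : V, e = s(V2.x, V2.u (Sum.inl v))) :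
    IsDomSet G {v : V | s(V2.x, V2.u (Sum.inl v)) ∈ S} ∧
      {v : V | s(V2.x, V2.u (Sum.inl v)) ∈ S}.ncard ≤ S.ncard := by
  classical
  obtain ⟨hgood, hdiam⟩ := hS
  set D : Set V := {v : V | s(V2.x, V2.u (Sum.inl v)) ∈ S} with hD
  -- neighbors of x in the augmented graph
  have hxadj : ∀ t : V2 V, (augGraph (G₂ G) S).Adj V2.x t →
      t = V2.z ∨ ∃ w ∈ D, t = V2.u (Sum.inl w) := by
    intro t h
    rw [augGraph, SimpleGraph.fromEdgeSet_adj] at h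
    obtain ⟨hmem | hmem, hne⟩ := h
    · left
      rw [SimpleGraph.mem_edgeSet, G₂, SimpleGraph.fromRel_adj] at hmem
      obtain ⟨_, hr | hr⟩ := hmem
      · rcases t with (a | a) | p | _ | _ <;> simp [baseRel] at hr ⊢
      · rcases t with (a | a) | p | _ | _ <;> simp [baseRel] at hr ⊢
    · right
      obtain ⟨w, hw⟩ := hproper _ hmem
      rw [Sym2.eq_iff] at hw
      rcases hw with ⟨_, rfl⟩ | ⟨hx, _⟩
      · exact ⟨w, by simpa [hD] using hmem, rfl⟩
      · exact absurd hx.symm (by simp)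
  have hzadj : ∀ v : V, ¬ (augGraph (G₂ G) S).Adj V2.z (V2.u (Sum.inl v)) := by
    intro v h
    rw [augGraph, SimpleGraph.fromEdgeSet_adj] at h
    obtain ⟨hmem | hmem, hne⟩ := h
    · rw [SimpleGraph.mem_edgeSet, G₂, SimpleGraph.fromRel_adj] at hmem
      obtain ⟨_, hr | hr⟩ := hmem <;> simp [baseRel] at hr
    · obtain ⟨w, hw⟩ := hproper _ hmem
      rw [Sym2.eq_iff] at hw
      rcases hw with ⟨hx, _⟩ | ⟨_, hx⟩ <;> simp at hx
  have huadj : ∀ w v : V, (augGraph (G₂ G) S).Adj (V2.u (Sum.inl w)) (V2.u (Sum.inl v)) →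
      G.Adj w v := by
    intro w v h
    rw [augGraph, SimpleGraph.fromEdgeSet_adj] at h
    obtain ⟨hmem | hmem, hne⟩ := h
    · rw [SimpleGraph.mem_edgeSet, G₂, SimpleGraph.fromRel_adj] at hmem
      obtain ⟨_, hr | hr⟩ := hmem
      · simpa [baseRel] using hr
      · exact (by simpa [baseRel] using hr : G.Adj v w).symm
    · obtain ⟨w', hw'⟩ := hproper _ hmem
      rw [Sym2.eq_iff] at hw'
      rcases hw' with ⟨hx, _⟩ | ⟨_, hx⟩ <;> simp at hx
  constructor
  · intro v hv
    have hne : (V2.x : V2 V) ≠ V2.u (Sum.inl v) := by simp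
    obtain ⟨w, hw⟩ := hdiam _ _ hne
    cases w with
    | cons h1 w' =>
      cases w' with
      | nil =>
        rcases hxadj _ h1 with h | ⟨w, hwD, hwe⟩
        · simp at h
        · rw [V2.u.injEq, Sum.inl.injEq] at hwe
          exact absurd (hwe ▸ hwD) hv
      | cons h2 w'' =>
        simp only [SimpleGraph.Walk.length_cons] at hw
        have h0 : w''.length = 0 := by omega
        have := SimpleGraph.Walk.eq_of_length_eq_zero h0
        subst this
        rcases hxadj _ h1 with h | ⟨w, hwD, hwe⟩
        · exact absurd (h ▸ h2) (hzadj v)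
        · exact ⟨w, hwD, huadj _ _ (hwe ▸ h2)⟩
  · have hfin : S.Finite := by
      have : S ⊆ (fun v : V => s(V2.x, V2.u (Sum.inl v))) '' Set.univ := by
        intro e he
        obtain ⟨v, hv⟩ := hproper _ he
        exact ⟨v, trivial, hv.symm⟩
      exact Set.Finite.subset ((Set.finite_univ).image _) this
    have hinj : Set.InjOn (fun v : V => s(V2.x, V2.u (Sum.inl v))) D := by
      intro a _ b _ h
      simp only [Sym2.eq_iff, V2.u.injEq, Sum.inl.injEq] at h
      rcases h with ⟨_, h⟩ | ⟨h, _⟩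
      · exact h
      · exact absurd h.symm (by simp)
    calc D.ncard = ((fun v : V => s(V2.x, V2.u (Sum.inl v))) '' D).ncard :=
          (Set.ncard_image_of_injOn hinj).symm
      _ ≤ S.ncard := Set.ncard_le_ncard (fun e ⟨v, hv, he⟩ => he ▸ hv) hfin
end

section
/- If G₂ has a diameter-2 augmenting set of size at most k, then G₁ has a dominating set of size at most k. -/
/-! ### Auxiliary definitions and lemmas -/

section Aux

variable {V : Type u}

instance [Finite V] : Finite (V2 V) := by
  apply Finite.of_injective (fun m : V2 V => match m with
    | .u c => (Sum.inl (Sum.inl c) : ((V ⊕ V) ⊕ Sym2 (V ⊕ V)) ⊕ Bool)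
    | .y p => Sum.inl (Sum.inr p.1)
    | .z => Sum.inr true
    | .x => Sum.inr false)
  intro a b hab
  cases a <;> cases b <;> simp_all [Subtype.ext_iff]

/-- A noncomputable choice of an ordered representative of an unordered pair. -/
noncomputable def pout {α : Type*} (p : Sym2 α) : α × α := (Quot.exists_rep p).choose

lemma pout_spec {α : Type*} (p : Sym2 α) : p = s((pout p).1, (pout p).2) :=
  ((Quot.exists_rep p).choose_spec).symm

lemma mem_pout {α : Type*} {c : α} {p : Sym2 α} (h : c ∈ p) :
    c = (pout p).1 ∨ c = (pout p).2 := by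
  rw [pout_spec p, Sym2.mem_iff] at h; exact h

/-- The underlying vertex of a copy. -/
def cval : V ⊕ V → V := Sum.elim id id

/-- The "slots" of a potential augmenting edge `e`: the copies `c` such that `e` can be
the crucial edge of a 2-path from `x` to the vertex `u c` (other than via an edge of the
special forms `{x, u c'}`, `{z, u c'}`). -/
def slots (e : Sym2 (V2 V)) : Set (V ⊕ V) :=
  {c | V2.u c ∈ e ∨ (V2.x ∈ e ∧ ∃ p, V2.y p ∈ e ∧ c ∈ p.1)}

noncomputable def saux [Nonempty V] : V2 V → V2 V → (V ⊕ V) × (V ⊕ V)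
  | .u c, .u c' => (c, c')
  | .u c, _ => (c, c)
  | _, .u c => (c, c)
  | .x, .y p => pout p.1
  | .y p, .x => pout p.1
  | _, _ => (Sum.inl (Classical.arbitrary V), Sum.inl (Classical.arbitrary V))

/-- An enumeration of the (at most two) slots of an edge. -/
noncomputable def spair [Nonempty V] (e : Sym2 (V2 V)) : (V ⊕ V) × (V ⊕ V) :=
  saux (pout e).1 (pout e).2

lemma saux_cover [Nonempty V] (a b : V2 V) (c : V ⊕ V) (h : c ∈ slots (s(a, b))) :
    c = (saux a b).1 ∨ c = (saux a b).2 := by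
  rw [slots, Set.mem_setOf_eq] at h
  rcases h with h | ⟨hx, p, hy, hc⟩
  · rw [Sym2.mem_iff] at h
    rcases h with h | h
    · subst h; cases b <;> simp [saux]
    · subst h; cases a <;> simp [saux]
  · rw [Sym2.mem_iff] at hx hy
    have hm := mem_pout hc
    rcases hx with hx | hx <;> rcases hy with hy | hy <;> subst hx
    · cases hy
    · subst hy; simpa [saux] using hm
    · subst hy; simpa [saux] using hm
    · cases hy

lemma slots_sub [Nonempty V] {e : Sym2 (V2 V)} {c : V ⊕ V} (h : c ∈ slots e) :
    c = (spair e).1 ∨ c = (spair e).2 := by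
  rw [spair]
  rw [pout_spec e] at h
  exact saux_cover _ _ _ h

variable {G : SimpleGraph V} {S : Set (Sym2 (V2 V))}

lemma aug_adj {a b : V2 V} :
    (augGraph (G₂ G) S).Adj a b ↔ ((G₂ G).Adj a b ∨ s(a, b) ∈ S) ∧ a ≠ b := by
  simp only [augGraph, SimpleGraph.fromEdgeSet_adj, Set.mem_union, SimpleGraph.mem_edgeSet]

lemma adj_x {m : V2 V} : (G₂ G).Adj V2.x m ↔ m = V2.z := by
  constructor
  · rintro ⟨hne, h | h⟩
    · cases m <;> simp [baseRel] at h
    · cases m <;> simp [baseRel] at h ⊢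
  · rintro rfl
    exact ⟨by simp, Or.inr trivial⟩

lemma not_adj_z_u {c : V ⊕ V} : ¬ (G₂ G).Adj V2.z (V2.u c) := by
  rintro ⟨hne, h | h⟩ <;> cases c <;> simp [baseRel] at h

lemma adj_u_u {c c' : V ⊕ V} (h : (G₂ G).Adj (V2.u c') (V2.u c)) :
    cval c' = cval c ∨ G.Adj (cval c') (cval c) := by
  obtain ⟨hne, h | h⟩ := h <;> cases c <;> cases c' <;> simp_all [baseRel, cval] <;>
    first | exact G.adj_symm h | exact Or.inr (G.adj_symm h)

lemma adj_y_u {p} {c : V ⊕ V} (h : (G₂ G).Adj (V2.y p) (V2.u c)) : c ∈ p.1 := by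
  obtain ⟨hne, h | h⟩ := h
  · simp [baseRel] at h
  · simpa [baseRel] using h

lemma walk_two {α : Type v} {H : SimpleGraph α} {a b : α} (hne : a ≠ b)
    (hw : ∃ w : H.Walk a b, w.length ≤ 2) : H.Adj a b ∨ ∃ m, H.Adj a m ∧ H.Adj m b := by
  obtain ⟨w, hw⟩ := hw
  cases w with
  | nil => exact absurd rfl hne
  | cons h w' =>
    cases w' with
    | nil => exact Or.inl h
    | cons h2 w'' =>
      cases w'' with
      | nil => exact Or.inr ⟨_, h, h2⟩
      | cons h3 w''' => simp [SimpleGraph.Walk.length_cons] at hw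

/-- The "directly dominating" part of the augmenting set: edges from `x` or `z` to a
copy of a vertex of `G₁`. -/
def S0 (S : Set (Sym2 (V2 V))) : Set (Sym2 (V2 V)) :=
  {e ∈ S | ∃ c' : V ⊕ V, e = s(V2.x, V2.u c') ∨ e = s(V2.z, V2.u c')}

/-- The set of copies directly hit by edges of `S0`. -/
def C0 (S : Set (Sym2 (V2 V))) : Set (V ⊕ V) :=
  {c' | s(V2.x, V2.u c') ∈ S ∨ s(V2.z, V2.u c') ∈ S}

lemma key [Nonempty V] (hA : IsAugSet G S) (c : V ⊕ V) :
    (cval c ∈ cval '' C0 S ∨ ∃ w ∈ cval '' C0 S, G.Adj w (cval c)) ∨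
      ∃ e ∈ S \ S0 S, c ∈ slots e := by
  have hne : (V2.x : V2 V) ≠ V2.u c := fun h => by cases h
  have memD0 : ∀ c' : V ⊕ V, (s(V2.x, V2.u c') ∈ S ∨ s(V2.z, V2.u c') ∈ S) →
      cval c' ∈ cval '' C0 S := fun c' h => ⟨c', h, rfl⟩
  rcases walk_two hne (hA.2 _ _ hne) with had | ⟨m, h1, h2⟩
  · rw [aug_adj] at had
    rcases had.1 with hg | hs
    · rw [adj_x] at hg; cases hg
    · exact Or.inl (Or.inl (memD0 c (Or.inl hs)))
  · rw [aug_adj] at h1 h2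
    rcases h1.1 with hg | hxm
    · rw [adj_x] at hg; subst hg
      rcases h2.1 with hg2 | hs2
      · exact absurd hg2 not_adj_z_u
      · exact Or.inl (Or.inl (memD0 c (Or.inr hs2)))
    · rcases h2.1 with hg2 | hs2
      · cases m with
        | u c' =>
          rcases adj_u_u hg2 with he | ha
          · exact Or.inl (Or.inl (he ▸ memD0 c' (Or.inl hxm)))
          · exact Or.inl (Or.inr ⟨cval c', memD0 c' (Or.inl hxm), ha⟩)
        | y p =>
          refine Or.inr ⟨s(V2.x, V2.y p), ⟨hxm, ?_⟩,
            Or.inr ⟨by simp, p, by simp, adj_y_u hg2⟩⟩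
          rintro ⟨-, c'', h | h⟩ <;> simp [Sym2.eq_iff] at h
        | z => exact absurd hg2 not_adj_z_u
        | x => exact absurd rfl h1.2
      · cases m with
        | z => exact Or.inl (Or.inl (memD0 c (Or.inr hs2)))
        | x => exact Or.inl (Or.inl (memD0 c (Or.inl hs2)))
        | u c' =>
          refine Or.inr ⟨s(V2.u c', V2.u c), ⟨hs2, ?_⟩, Or.inl (by simp)⟩
          rintro ⟨-, c'', h | h⟩ <;> simp [Sym2.eq_iff] at h
        | y p =>
          refine Or.inr ⟨s(V2.y p, V2.u c), ⟨hs2, ?_⟩, Or.inl (by simp)⟩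
          rintro ⟨-, c'', h | h⟩ <;> simp [Sym2.eq_iff] at h

lemma ncard_prod' {α β : Type*} (s : Set α) (t : Set β) :
    (s ×ˢ t).ncard = s.ncard * t.ncard := by
  rw [← Nat.card_coe_set_eq, ← Nat.card_coe_set_eq, ← Nat.card_coe_set_eq,
    Nat.card_congr (Equiv.Set.prod s t), Nat.card_prod]

end Aux

theorem stmt5 {V : Type u} [Fintype V] [Nontrivial V] (G : SimpleGraph V)
    (hConn : G.Connected) (k : ℕ)
    (h : ∃ S : Set (Sym2 (V2 V)), IsAugSet G S ∧ S.ncard ≤ k) :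
    ∃ D : Set V, IsDomSet G D ∧ D.ncard ≤ k := by
  classical
  obtain ⟨S, hA, hk⟩ := h
  set A : Set V := {v : V | (∃ e ∈ S \ S0 S, Sum.inl v ∈ slots e) ∧
    (∃ e ∈ S \ S0 S, Sum.inr v ∈ slots e)} with hAdef
  refine ⟨cval '' C0 S ∪ A, ?_, ?_⟩
  · intro v hv
    rcases key hA (Sum.inl v) with (hd | ⟨w, hw, hadj⟩) | h1
    · exact absurd (Set.mem_union_left _ hd) hv
    · exact ⟨w, Set.mem_union_left _ hw, hadj⟩
    · rcases key hA (Sum.inr v) with (hd | ⟨w, hw, hadj⟩) | h2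
      · exact absurd (Set.mem_union_left _ hd) hv
      · exact ⟨w, Set.mem_union_left _ hw, hadj⟩
      · exact absurd (Set.mem_union_right _ (show v ∈ A from ⟨h1, h2⟩)) hv
  · -- cardinality bound
    have hS0sub : S0 S ⊆ S := fun e he => he.1
    -- |cval '' C0 S| ≤ |S0 S|
    have hb1 : (cval '' C0 S).ncard ≤ (S0 S).ncard := by
      refine le_trans (Set.ncard_image_le (Set.toFinite _)) ?_
      refine Set.ncard_le_ncard_of_injOn
        (fun c' => if s(V2.x, V2.u c') ∈ S then s(V2.x, V2.u c') else s(V2.z, V2.u c'))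
        ?_ ?_ (Set.toFinite _)
      · intro c' hc'
        beta_reduce
        by_cases hx : s(V2.x, V2.u c') ∈ S
        · rw [if_pos hx]; exact ⟨hx, c', Or.inl rfl⟩
        · rw [if_neg hx]; exact ⟨hc'.resolve_left hx, c', Or.inr rfl⟩
      · intro c1 h1 c2 h2 heq
        beta_reduce at heq
        by_cases hx1 : s(V2.x, V2.u c1) ∈ S <;> by_cases hx2 : s(V2.x, V2.u c2) ∈ S <;>
          simp only [if_pos, if_neg, hx1, hx2, if_true, if_false] at heq <;>
          simp [Sym2.eq_iff] at heq <;> exact heq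
    -- |A| ≤ |S \ S0 S|
    have hb2 : A.ncard ≤ (S \ S0 S).ncard := by
      have key2 : (A ×ˢ (Set.univ : Set Bool)).ncard ≤
          ((S \ S0 S) ×ˢ (Set.univ : Set Bool)).ncard := by
        refine Set.ncard_le_ncard_of_injOn
          (fun vb : V × Bool =>
            if h : ∃ e ∈ S \ S0 S, (cond vb.2 (Sum.inl vb.1) (Sum.inr vb.1)) ∈ slots e then
              (h.choose, decide ((cond vb.2 (Sum.inl vb.1) (Sum.inr vb.1)) = (spair h.choose).1))
            else (s(V2.x, V2.x), true))
          ?_ ?_ (Set.toFinite _)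
        · rintro ⟨v, b⟩ hm
          have hex : ∃ e ∈ S \ S0 S, (cond b (Sum.inl v) (Sum.inr v)) ∈ slots e := by
            cases b
            · exact hm.1.2
            · exact hm.1.1
          beta_reduce
          rw [dif_pos hex]
          exact ⟨hex.choose_spec.1, trivial⟩
        · rintro ⟨v, b⟩ hm ⟨v', b'⟩ hm' hF
          have hex : ∃ e ∈ S \ S0 S, (cond b (Sum.inl v) (Sum.inr v)) ∈ slots e := by
            cases b
            · exact hm.1.2
            · exact hm.1.1
          have hex' : ∃ e ∈ S \ S0 S, (cond b' (Sum.inl v') (Sum.inr v')) ∈ slots e := by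
            cases b'
            · exact hm'.1.2
            · exact hm'.1.1
          beta_reduce at hF
          rw [dif_pos hex, dif_pos hex'] at hF
          have heq : hex.choose = hex'.choose := congrArg Prod.fst hF
          have hb : decide ((cond b (Sum.inl v) (Sum.inr v)) = (spair hex.choose).1) =
              decide ((cond b' (Sum.inl v') (Sum.inr v')) = (spair hex'.choose).1) :=
            congrArg Prod.snd hF
          rw [← heq] at hb
          have hsl : (cond b (Sum.inl v) (Sum.inr v)) ∈ slots hex.choose :=
            hex.choose_spec.2
          have hsl' : (cond b' (Sum.inl v') (Sum.inr v')) ∈ slots hex.choose := by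
            rw [heq]; exact hex'.choose_spec.2
          have hiff : ((cond b (Sum.inl v) (Sum.inr v)) = (spair hex.choose).1) ↔
              ((cond b' (Sum.inl v') (Sum.inr v')) = (spair hex.choose).1) :=
            decide_eq_decide.mp hb
          have hcc : (cond b (Sum.inl v) (Sum.inr v)) =
              (cond b' (Sum.inl v') (Sum.inr v')) := by
            by_cases hd : (cond b (Sum.inl v) (Sum.inr v)) = (spair hex.choose).1
            · exact hd.trans (hiff.mp hd).symm
            · have hd' : ¬ (cond b' (Sum.inl v') (Sum.inr v')) = (spair hex.choose).1 :=
                fun hcon => hd (hiff.mpr hcon)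
              rcases slots_sub hsl with h1 | h1
              · exact absurd h1 hd
              · rcases slots_sub hsl' with h2 | h2
                · exact absurd h2 hd'
                · rw [h1, h2]
          cases b <;> cases b' <;> simp_all
      rw [ncard_prod', ncard_prod', Set.ncard_univ] at key2
      have h2 : Nat.card Bool = 2 := by simp
      rw [h2] at key2
      omega
    calc (cval '' C0 S ∪ A).ncard ≤ (cval '' C0 S).ncard + A.ncard :=
          Set.ncard_union_le _ _
      _ ≤ (S0 S).ncard + (S \ S0 S).ncard := add_le_add hb1 hb2
      _ = S.ncard := by
          rw [add_comm]
          exact Set.ncard_diff_add_ncard_of_subset hS0sub (Set.toFinite _)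
      _ ≤ k := hk
end

section
/- Suppose S is a diameter-2 augmenting set for G₂ each of whose pairs joins x to a vertex of U₁ ∪ U₂ ∪ Y, and suppose every vertex u ∈ U⁺ in fact has all of x's S-neighbors unavailable through Y, i.e. there is no pair {x, y(u,w)} in S. Then every vertex u ∈ U⁺ is adjacent in G₂ to some vertex of U_x. -/
/-- `U_x`: the vertices `u` of `U₁ ∪ U₂` with `{x, u} ∈ S`. -/
def Ux {V : Type u} (S : Set (Sym2 (V2 V))) : Set (V ⊕ V) :=
  {w | s(V2.x, V2.u w) ∈ S}

/-- `U⁻`: the vertices `u` of `U₁ ∪ U₂` not in `U_x` such that `{x, y(u,w)} ∈ S` for some `w`. -/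
def Uminus {V : Type u} (S : Set (Sym2 (V2 V))) : Set (V ⊕ V) :=
  {w | w ∉ Ux S ∧ ∃ w', ∃ h : w ≠ w', s(V2.x, yv w w' h) ∈ S}

/-- `U⁺`: the vertices of `U₁ ∪ U₂` in neither `U_x` nor `U⁻`. -/
def Uplus {V : Type u} (S : Set (Sym2 (V2 V))) : Set (V ⊕ V) :=
  {w | w ∉ Ux S ∧ w ∉ Uminus S}

theorem stmt13 {V : Type u} [Fintype V] [Nontrivial V] (G : SimpleGraph V)
    (hConn : G.Connected) (S : Set (Sym2 (V2 V))) (hS : IsAugSet G S)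
    (hall : ∀ e ∈ S, (∃ w : V ⊕ V, e = s(V2.x, V2.u w)) ∨
      (∃ p : {p : Sym2 (V ⊕ V) // ¬ p.IsDiag}, e = s(V2.x, V2.y p)))
    (hextra : ∀ u ∈ Uplus S, ¬ ∃ w, ∃ h : u ≠ w, s(V2.x, yv u w h) ∈ S) :
    ∀ u ∈ Uplus S, ∃ c ∈ Ux S, (G₂ G).Adj (V2.u u) (V2.u c) := by
  intro u hu
  obtain ⟨hSvalid, hdiam⟩ := hS
  -- every edge of S contains x
  have hxmem : ∀ a b : V2 V, s(a, b) ∈ S → a = V2.x ∨ b = V2.x := by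
    intro a b hab
    rcases hall _ hab with ⟨w, hw⟩ | ⟨p, hp⟩
    · rw [Sym2.eq_iff] at hw; tauto
    · rw [Sym2.eq_iff] at hp; tauto
  -- classify aug-neighbors of x
  have hadjx : ∀ m : V2 V, (augGraph (G₂ G) S).Adj V2.x m →
      m = V2.z ∨ (∃ c, m = V2.u c ∧ c ∈ Ux S) ∨
        (∃ p, m = V2.y p ∧ s(V2.x, V2.y p) ∈ S) := by
    intro m hm
    rw [augGraph, SimpleGraph.fromEdgeSet_adj] at hm
    obtain ⟨hmem, hne⟩ := hm
    rcases hmem with hG | hSm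
    · rw [SimpleGraph.mem_edgeSet, G₂, SimpleGraph.fromRel_adj] at hG
      rcases hG.2 with h | h
      · cases m with
        | z => exact h.elim
        | u a => exact h.elim
        | y p => exact h.elim
        | x => exact h.elim
      · cases m with
        | z => exact Or.inl rfl
        | u a => cases a <;> exact h.elim
        | y p => exact h.elim
        | x => exact h.elim
    · rcases hall _ hSm with ⟨w, hw⟩ | ⟨p, hp⟩
      · rw [Sym2.eq_iff] at hw
        rcases hw with ⟨-, rfl⟩ | ⟨h1, -⟩
        · exact Or.inr (Or.inl ⟨w, rfl, hSm⟩)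
        · cases h1
      · rw [Sym2.eq_iff] at hp
        rcases hp with ⟨-, rfl⟩ | ⟨h1, -⟩
        · exact Or.inr (Or.inr ⟨p, rfl, hSm⟩)
        · cases h1
  -- aug-adjacency to (u u) from a non-x vertex is G₂ adjacency
  have hG2adj : ∀ m : V2 V, m ≠ V2.x → (augGraph (G₂ G) S).Adj m (V2.u u) →
      (G₂ G).Adj m (V2.u u) := by
    intro m hm hadj
    rw [augGraph, SimpleGraph.fromEdgeSet_adj] at hadj
    rcases hadj.1 with h | h
    · exact h
    · rcases hxmem _ _ h with h1 | h1
      · exact absurd h1 hm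
      · cases h1
  -- from adjacency of a middle vertex m to u u (m an x-neighbor) derive the goal
  have key : ∀ m : V2 V, (augGraph (G₂ G) S).Adj V2.x m →
      (augGraph (G₂ G) S).Adj m (V2.u u) →
      ∃ c ∈ Ux S, (G₂ G).Adj (V2.u u) (V2.u c) := by
    intro m hxm hmu
    rcases hadjx m hxm with rfl | ⟨c, rfl, hc⟩ | ⟨p, rfl, hps⟩
    · have h := hG2adj _ (fun h => by cases h) hmu
      rw [G₂, SimpleGraph.fromRel_adj] at h
      rcases h.2 with h | h
      · exact h.elim
      · rcases u with a | a <;> exact h.elim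
    · exact ⟨c, hc, (hG2adj _ (fun h => by cases h) hmu).symm⟩
    · have h := hG2adj _ (fun h => by cases h) hmu
      rw [G₂, SimpleGraph.fromRel_adj] at h
      rcases h.2 with h | h
      · exact h.elim
      · -- h : u ∈ p.1
        have h' : u ∈ p.1 := by rcases u with a | a <;> exact h
        obtain ⟨w', hw'⟩ := Sym2.mem_iff_exists.mp h' 
        have hne : u ≠ w' := by
          intro hc; apply p.2; rw [hw', hc]; exact Sym2.mk_isDiag_iff.mpr rfl
        exact absurd ⟨w', hne, by
          have : yv u w' hne = V2.y p := by
            unfold yv; congr 1; exact Subtype.ext hw'.symm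
          rw [this]; exact hps⟩ (hextra u hu)
  have hne : (V2.x : V2 V) ≠ V2.u u := fun h => by cases h
  obtain ⟨w, hw⟩ := hdiam V2.x (V2.u u) hne
  cases w with
  | cons h1 p =>
    cases p with
    | nil =>
      -- length 1 : direct adjacency, impossible since u ∉ Ux
      rcases hadjx _ h1 with h | ⟨c, hc, hcx⟩ | ⟨p, hp, -⟩
      · cases h
      · cases hc; exact absurd hcx hu.1
      · cases hp
    | cons h2 p2 =>
      cases p2 with
      | nil => exact key _ h1 h2
      | cons h3 p3 => simp [SimpleGraph.Walk.length_cons] at hw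
end
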